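/- Inverse of a twist: let R ∈ End(V⊗V) be an invertible solution of the Yang–Baxter equation and (F, G) a twisting pair for R with twisted matrix R̃ = τ(F)⁻¹ R F. Then (F⁻¹, G⁻¹) is a twisting pair for R̃, and the twist of R̃ by (F⁻¹, G⁻¹) recovers R. -/
import Mathlib


open TensorProduct

noncomputable section
variable (k V : Type*) [Field k] [AddCommGroup V] [Module k V]

/-- The flip `P : V ⊗ V → V ⊗ V`. -/
def flipE : Module.End k (V ⊗[k] V) := (TensorProduct.comm k V V).toLinearMap

/-- `τ(X) = P X P`. -/
def tauE (X : Module.End k (V ⊗[k] V)) : Module.End k (V ⊗[k] V) :=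
  flipE k V * X * flipE k V

/-- The embedding `X ↦ X₂₃` into `End(V ⊗ V ⊗ V)`. -/
def leg23 (X : Module.End k (V ⊗[k] V)) : Module.End k (V ⊗[k] (V ⊗[k] V)) :=
  LinearMap.lTensor V X

/-- The embedding `X ↦ X₁₂` into `End(V ⊗ V ⊗ V)`. -/
def leg12 (X : Module.End k (V ⊗[k] V)) : Module.End k (V ⊗[k] (V ⊗[k] V)) :=
  (TensorProduct.assoc k V V V).toLinearMap ∘ₗ LinearMap.rTensor V X ∘ₗ
    (TensorProduct.assoc k V V V).symm.toLinearMap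

/-- The flip of factors 1 and 2. -/
def P12 : Module.End k (V ⊗[k] (V ⊗[k] V)) := leg12 k V (flipE k V)

/-- The flip of factors 2 and 3. -/
def P23 : Module.End k (V ⊗[k] (V ⊗[k] V)) := leg23 k V (flipE k V)

/-- The embedding `X ↦ X₁₃`. -/
def leg13 (X : Module.End k (V ⊗[k] V)) : Module.End k (V ⊗[k] (V ⊗[k] V)) :=
  P23 k V * leg12 k V X * P23 k V

/-- The Yang–Baxter equation `R₁₂R₁₃R₂₃ = R₂₃R₁₃R₁₂`. -/
def YB (R : Module.End k (V ⊗[k] V)) : Prop :=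
  leg12 k V R * leg13 k V R * leg23 k V R = leg23 k V R * leg13 k V R * leg12 k V R

/-- `(F, G)` (with given two-sided inverses `F'`, `G'`) is a *twisting pair* for `R`:
`Φ := G F₁₂⁻¹` and `Ψ := G F₂₃⁻¹` satisfy `R₁₂ Φ = Φ^{(213)} R₁₂` and
`R₂₃ Ψ = Ψ^{(132)} R₂₃`. -/
def TwistingPair (R F F' : Module.End k (V ⊗[k] V))
    (G G' : Module.End k (V ⊗[k] (V ⊗[k] V))) : Prop :=
  F * F' = 1 ∧ F' * F = 1 ∧ G * G' = 1 ∧ G' * G = 1 ∧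
  leg12 k V R * (G * leg12 k V F') =
    (P12 k V * (G * leg12 k V F') * P12 k V) * leg12 k V R ∧
  leg23 k V R * (G * leg23 k V F') =
    (P23 k V * (G * leg23 k V F') * P23 k V) * leg23 k V R

/- ### Auxiliary lemmas -/

lemma flipE_sq : flipE k V * flipE k V = 1 := by
  ext x y
  simp [flipE]

lemma leg12_mul (X Y : Module.End k (V ⊗[k] V)) :
    leg12 k V (X * Y) = leg12 k V X * leg12 k V Y := by
  ext x y z
  simp [leg12, Module.End.mul_apply]

lemma leg12_one : leg12 k V 1 = 1 := by
  ext x y z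
  simp [leg12]

lemma leg23_mul (X Y : Module.End k (V ⊗[k] V)) :
    leg23 k V (X * Y) = leg23 k V X * leg23 k V Y := by
  ext x y z
  simp [leg23, Module.End.mul_apply]

lemma leg23_one : leg23 k V 1 = 1 := by
  ext x y z
  simp [leg23]

lemma P12_sq : P12 k V * P12 k V = 1 := by
  rw [P12, ← leg12_mul, flipE_sq, leg12_one]

lemma P23_sq : P23 k V * P23 k V = 1 := by
  rw [P23, ← leg23_mul, flipE_sq, leg23_one]

/-- Monoid lemma: conjugation relation passes to inverses. -/
lemma tw_aux1 {M : Type*} [Monoid M] (P L X X' : M) (hP : P * P = 1)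
    (hXX' : X * X' = 1) (hX'X : X' * X = 1) (h : L * X = P * X * P * L) :
    L * X' = P * X' * P * L := by
  have hp : ∀ x : M, P * (P * x) = x := fun x => by rw [← mul_assoc, hP, one_mul]
  have hx' : ∀ x : M, X' * (X * x) = x := fun x => by rw [← mul_assoc, hX'X, one_mul]
  have e := congrArg (fun y => P * (X' * (P * (y * X')))) h
  simp only [mul_assoc, hp, hx', hXX', mul_one] at e
  simp only [mul_assoc]
  exact e.symm

/-- Monoid lemma: the key computation for the twisted relation. -/
lemma tw_aux2 {M : Type*} [Monoid M] (P L A A' G' : M) (hP : P * P = 1)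
    (hA : A * A' = 1) (hA' : A' * A = 1)
    (h : L * (A * G') = P * (A * G') * P * L) :
    P * A' * P * L * A * (G' * A) = P * (G' * A) * P * (P * A' * P * L * A) := by
  have hp : ∀ x : M, P * (P * x) = x := fun x => by rw [← mul_assoc, hP, one_mul]
  have ha : ∀ x : M, A * (A' * x) = x := fun x => by rw [← mul_assoc, hA, one_mul]
  have ha' : ∀ x : M, A' * (A * x) = x := fun x => by rw [← mul_assoc, hA', one_mul]
  have hL : ∀ x : M, L * (A * (G' * x)) = P * (A * (G' * (P * (L * x)))) := by
    intro x
    have e := congrArg (fun y => y * x) h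
    simp only [mul_assoc] at e
    exact e
  simp only [mul_assoc]
  rw [hL A]
  simp only [hp, ha, ha']

/-- Monoid lemma: untwisting recovers `R`. -/
lemma tw_aux3 {M : Type*} [Monoid M] (P F F' R : M) (hP : P * P = 1)
    (hFF' : F * F' = 1) (hF'F : F' * F = 1) :
    (P * F * P) * ((P * F' * P) * R * F) * F' = R := by
  have hp : ∀ x : M, P * (P * x) = x := fun x => by rw [← mul_assoc, hP, one_mul]
  have hf : ∀ x : M, F * (F' * x) = x := fun x => by rw [← mul_assoc, hFF', one_mul]
  simp only [mul_assoc, hp, hf, hFF', mul_one]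

/-- inverse of a twist: if `(F, G)` is a twisting pair for `R` with
twisted matrix `R̃ = τ(F)⁻¹ R F`, then `(F⁻¹, G⁻¹)` is a twisting pair for `R̃`, and
twisting `R̃` by it recovers `R`. -/
theorem twistingPair_inv [FiniteDimensional k V]
    (R R' F F' : Module.End k (V ⊗[k] V))
    (G G' : Module.End k (V ⊗[k] (V ⊗[k] V)))
    (hR : R * R' = 1) (hR' : R' * R = 1)
    (hYB : YB k V R)
    (hTP : TwistingPair k V R F F' G G') :
    TwistingPair k V (tauE k V F' * R * F) F' F G' G ∧
    tauE k V F * (tauE k V F' * R * F) * F' = R := by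
  obtain ⟨hFF', hF'F, hGG', hG'G, h12, h23⟩ := hTP
  -- abbreviations
  have hA12 : leg12 k V F * leg12 k V F' = 1 := by
    rw [← leg12_mul, hFF', leg12_one]
  have hA12' : leg12 k V F' * leg12 k V F = 1 := by
    rw [← leg12_mul, hF'F, leg12_one]
  have hA23 : leg23 k V F * leg23 k V F' = 1 := by
    rw [← leg23_mul, hFF', leg23_one]
  have hA23' : leg23 k V F' * leg23 k V F = 1 := by
    rw [← leg23_mul, hF'F, leg23_one]
  -- expansion of leg12/leg23 of the twisted R-matrix
  have hRt12 : leg12 k V (tauE k V F' * R * F) =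
      P12 k V * leg12 k V F' * P12 k V * leg12 k V R * leg12 k V F := by
    simp only [tauE, leg12_mul, P12]
  have hRt23 : leg23 k V (tauE k V F' * R * F) =
      P23 k V * leg23 k V F' * P23 k V * leg23 k V R * leg23 k V F := by
    simp only [tauE, leg23_mul, P23]
  -- inverse products
  have hXX'12 : (G * leg12 k V F') * (leg12 k V F * G') = 1 := by
    rw [mul_assoc, ← mul_assoc (leg12 k V F') (leg12 k V F) G', hA12', one_mul, hGG']
  have hX'X12 : (leg12 k V F * G') * (G * leg12 k V F') = 1 := by
    rw [mul_assoc, ← mul_assoc G' G (leg12 k V F'), hG'G, one_mul, hA12]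
  have hXX'23 : (G * leg23 k V F') * (leg23 k V F * G') = 1 := by
    rw [mul_assoc, ← mul_assoc (leg23 k V F') (leg23 k V F) G', hA23', one_mul, hGG']
  have hX'X23 : (leg23 k V F * G') * (G * leg23 k V F') = 1 := by
    rw [mul_assoc, ← mul_assoc G' G (leg23 k V F'), hG'G, one_mul, hA23]
  -- inverted relations
  have h12' : leg12 k V R * (leg12 k V F * G') =
      P12 k V * (leg12 k V F * G') * P12 k V * leg12 k V R :=
    tw_aux1 (P12 k V) (leg12 k V R) _ _ (P12_sq k V) hXX'12 hX'X12 h12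
  have h23' : leg23 k V R * (leg23 k V F * G') =
      P23 k V * (leg23 k V F * G') * P23 k V * leg23 k V R :=
    tw_aux1 (P23 k V) (leg23 k V R) _ _ (P23_sq k V) hXX'23 hX'X23 h23
  refine ⟨⟨hF'F, hFF', hG'G, hGG', ?_, ?_⟩, ?_⟩
  · rw [hRt12]
    exact tw_aux2 (P12 k V) (leg12 k V R) (leg12 k V F) (leg12 k V F') G'
      (P12_sq k V) hA12 hA12' h12'
  · rw [hRt23]
    exact tw_aux2 (P23 k V) (leg23 k V R) (leg23 k V F) (leg23 k V F') G'
      (P23_sq k V) hA23 hA23' h23'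
  · simp only [tauE]
    exact tw_aux3 (flipE k V) F F' R (flipE_sq k V) hFF' hF'F
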